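/- Let C₀(Q) ⊆ A be a central non-degenerate inclusion. If the set Q^unif_simple = {q ∈ Q : A/J^unif_q is simple} is non-empty and ⋂_{q ∈ Q^unif_simple} J^unif_q = {0}, then the inclusion C₀(Q) ⊆ A is essential. -/

import Mathlib

open scoped ComplexOrder
open ZeroAtInfty

/-- The smallest closed two-sided ideal of `A` containing `S` (as a set): the intersection of
all closed two-sided ideals containing `S`. -/
def closedIdealGenBy {A : Type*} [NonUnitalCStarAlgebra A] (S : Set A) : Set A :=
  ⋂₀ {L : Set A | (∃ I : TwoSidedIdeal A, (I : Set A) = L) ∧ IsClosed L ∧ S ⊆ L}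

/-- `J^unif_q`: the closed two-sided ideal of `A` generated by
`C_{0,q}(Q) = {f ∈ C₀(Q) : f q = 0}` (viewed in `A` via the inclusion `ι`). -/
def Junif {Q : Type*} [TopologicalSpace Q] [LocallyCompactSpace Q] [T2Space Q]
    {A : Type*} [NonUnitalCStarAlgebra A] (ι : C₀(Q, ℂ) →⋆ₙₐ[ℂ] A) (q : Q) : Set A :=
  closedIdealGenBy {a : A | ∃ f : C₀(Q, ℂ), f q = 0 ∧ a = ι f}

/-- `A / J` is a simple C*-algebra, encoded via the correspondence between closed two-sided
ideals of `A / J` and closed two-sided ideals of `A` containing `J`: `J` is proper and the only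
closed two-sided ideals of `A` containing `J` are `J` itself and `A`. -/
def QuotientSimpleBy {A : Type*} [NonUnitalCStarAlgebra A] (J : Set A) : Prop :=
  J ≠ Set.univ ∧ ∀ L : TwoSidedIdeal A, IsClosed (L : Set A) → J ⊆ (L : Set A) →
    (L : Set A) = J ∨ (L : Set A) = Set.univ

/-- The inclusion `Bs ⊆ A` is essential. -/
def EssentialIncl {A : Type*} [NonUnitalCStarAlgebra A] (Bs : Set A) : Prop :=
  ∀ L : TwoSidedIdeal A, IsClosed (L : Set A) → (L : Set A) ≠ Set.univ →
    Bs ∩ (L : Set A) = {0} → (L : Set A) = {0}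

section helpers

variable {A : Type*} [NonUnitalCStarAlgebra A]

lemma subset_cig (S : Set A) : S ⊆ closedIdealGenBy S :=
  fun _ hx => Set.mem_sInter.2 fun _ hL => hL.2.2 hx

lemma cig_subset {S T : Set A} (hI : ∃ I : TwoSidedIdeal A, (I : Set A) = T)
    (hc : IsClosed T) (hS : S ⊆ T) : closedIdealGenBy S ⊆ T :=
  Set.sInter_subset_of_mem ⟨hI, hc, hS⟩

lemma cig_zero (S : Set A) : (0 : A) ∈ closedIdealGenBy S :=
  Set.mem_sInter.2 fun L hL => by
    obtain ⟨⟨I, rfl⟩, -, -⟩ := hL; exact I.zero_mem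

lemma cig_mul_left (S : Set A) (a : A) {x : A} (hx : x ∈ closedIdealGenBy S) :
    a * x ∈ closedIdealGenBy S :=
  Set.mem_sInter.2 fun L hL => by
    have hxL := Set.mem_sInter.1 hx L hL
    obtain ⟨⟨I, rfl⟩, -, -⟩ := hL
    exact I.mul_mem_left a x hxL

lemma cig_mul_right (S : Set A) (a : A) {x : A} (hx : x ∈ closedIdealGenBy S) :
    x * a ∈ closedIdealGenBy S :=
  Set.mem_sInter.2 fun L hL => by
    have hxL := Set.mem_sInter.1 hx L hL
    obtain ⟨⟨I, rfl⟩, -, -⟩ := hL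
    exact I.mul_mem_right x a hxL

/-- Sup norm bound for `C₀` functions. -/
lemma c0_norm_le {Q : Type*} [TopologicalSpace Q] (f : C₀(Q, ℂ)) {c : ℝ} (hc : 0 ≤ c)
    (h : ∀ x, ‖f x‖ ≤ c) : ‖f‖ ≤ c := by
  rw [← ZeroAtInftyContinuousMap.norm_toBCF_eq_norm]
  exact (BoundedContinuousFunction.norm_le hc).2 h

lemma c0_norm_apply_le {Q : Type*} [TopologicalSpace Q] (f : C₀(Q, ℂ)) (x : Q) :
    ‖f x‖ ≤ ‖f‖ := by
  rw [← ZeroAtInftyContinuousMap.norm_toBCF_eq_norm]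
  exact BoundedContinuousFunction.norm_coe_le_norm f.toBCF x

/-- A `C₀` bump function: `1` on a neighborhood of `q`, `0` outside `W`, norm at most `1`. -/
lemma exists_bump {Q : Type*} [TopologicalSpace Q] [LocallyCompactSpace Q] [T2Space Q]
    {q : Q} {W : Set Q} (hW : IsOpen W) (hq : q ∈ W) :
    ∃ (h : C₀(Q, ℂ)) (N : Set Q), N ∈ nhds q ∧ (∀ x ∈ N, h x = 1) ∧
      (∀ x, x ∉ W → h x = 0) ∧ ‖h‖ ≤ 1 := by
  obtain ⟨K, hKc, hqK, hKW⟩ := exists_compact_subset hW hq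
  obtain ⟨φ, hφ1, hφ0, hφsupp, hφmem⟩ :=
    exists_continuous_one_zero_of_isCompact hKc hW.isClosed_compl
      (Set.disjoint_compl_right_iff_subset.mpr hKW)
  refine ⟨⟨⟨fun x => (φ x : ℂ), Complex.continuous_ofReal.comp (map_continuous φ)⟩, ?_⟩,
    K, ?_, ?_, ?_, ?_⟩
  · have hev : {x : Q | ((φ x : ℂ)) = 0} ∈ Filter.cocompact Q := by
      rw [Filter.mem_cocompact]
      refine ⟨tsupport φ, hφsupp, fun x hx => ?_⟩
      simp only [Set.mem_compl_iff] at hx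
      simp only [Set.mem_setOf_eq, Complex.ofReal_eq_zero]
      exact image_eq_zero_of_notMem_tsupport hx
    exact Filter.Tendsto.congr'
      (Filter.eventuallyEq_of_mem hev fun x hx => hx).symm
      tendsto_const_nhds
  · exact mem_interior_iff_mem_nhds.1 hqK
  · intro x hx
    simp [hφ1 hx]
  · intro x hx
    simp [hφ0 (Set.mem_compl hx)]
  · refine c0_norm_le _ zero_le_one fun x => ?_
    simp only [ZeroAtInftyContinuousMap.coe_mk, ContinuousMap.coe_mk, Complex.norm_real]
    rw [Real.norm_eq_abs, abs_of_nonneg (hφmem x).1]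
    exact (hφmem x).2

variable {Q : Type*} [TopologicalSpace Q] [LocallyCompactSpace Q] [T2Space Q]

/-- Elements of `J^unif_q` are uniformly small when multiplied by bump functions
concentrated near `q`. -/
lemma junif_small (ι : C₀(Q, ℂ) →⋆ₙₐ[ℂ] A) (hisom : Isometry ι)
    (hcentral : ∀ (f : C₀(Q, ℂ)) (a : A), ι f * a = a * ι f) (q : Q) {j : A}
    (hj : j ∈ Junif ι q) :
    ∀ ε : ℝ, 0 < ε → ∃ U ∈ nhds q, ∀ h : C₀(Q, ℂ), (∀ x, x ∉ U → h x = 0) → ‖h‖ ≤ 1 →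
      ‖ι h * j‖ ≤ ε := by
  have hnormι : ∀ f : C₀(Q, ℂ), ‖ι f‖ = ‖f‖ := fun f =>
    hisom.norm_map_of_map_zero (map_zero ι) f
  set K : Set A := {a | ∀ ε : ℝ, 0 < ε → ∃ U ∈ nhds q, ∀ h : C₀(Q, ℂ),
    (∀ x, x ∉ U → h x = 0) → ‖h‖ ≤ 1 → ‖ι h * a‖ ≤ ε} with hK
  have hKzero : (0 : A) ∈ K := fun ε hε =>
    ⟨Set.univ, Filter.univ_mem, fun h _ _ => by simp [hε.le]⟩
  have hKadd : ∀ {x y : A}, x ∈ K → y ∈ K → x + y ∈ K := by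
    intro x y hx hy ε hε
    obtain ⟨U₁, hU₁, hx₁⟩ := hx (ε/2) (by linarith)
    obtain ⟨U₂, hU₂, hy₂⟩ := hy (ε/2) (by linarith)
    refine ⟨U₁ ∩ U₂, Filter.inter_mem hU₁ hU₂, fun h hh hn => ?_⟩
    have h₁ : ∀ x, x ∉ U₁ → h x = 0 := fun x hx => hh x fun hx' => hx hx'.1
    have h₂ : ∀ x, x ∉ U₂ → h x = 0 := fun x hx => hh x fun hx' => hx hx'.2
    calc ‖ι h * (x + y)‖ = ‖ι h * x + ι h * y‖ := by rw [mul_add]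
      _ ≤ ‖ι h * x‖ + ‖ι h * y‖ := norm_add_le _ _
      _ ≤ ε/2 + ε/2 := add_le_add (hx₁ h h₁ hn) (hy₂ h h₂ hn)
      _ = ε := by ring
  have hKneg : ∀ {x : A}, x ∈ K → -x ∈ K := by
    intro x hx ε hε
    obtain ⟨U, hU, hx'⟩ := hx ε hε
    exact ⟨U, hU, fun h hh hn => by rw [mul_neg, norm_neg]; exact hx' h hh hn⟩
  have hKmull : ∀ {x y : A}, y ∈ K → x * y ∈ K := by
    intro a x hx ε hε
    have hpos : (0:ℝ) < ‖a‖ + 1 := by positivity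
    obtain ⟨U, hU, hx'⟩ := hx (ε / (‖a‖ + 1)) (by positivity)
    refine ⟨U, hU, fun h hh hn => ?_⟩
    have : ι h * (a * x) = a * (ι h * x) := by
      rw [← mul_assoc, hcentral h a, mul_assoc]
    rw [this]
    calc ‖a * (ι h * x)‖ ≤ ‖a‖ * ‖ι h * x‖ := norm_mul_le _ _
      _ ≤ (‖a‖ + 1) * (ε / (‖a‖ + 1)) := by
          apply mul_le_mul (by linarith) (hx' h hh hn) (norm_nonneg _) (by positivity)
      _ = ε := by field_simp
  have hKmulr : ∀ {x y : A}, x ∈ K → x * y ∈ K := by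
    intro x a hx ε hε
    have hpos : (0:ℝ) < ‖a‖ + 1 := by positivity
    obtain ⟨U, hU, hx'⟩ := hx (ε / (‖a‖ + 1)) (by positivity)
    refine ⟨U, hU, fun h hh hn => ?_⟩
    rw [← mul_assoc]
    calc ‖ι h * x * a‖ ≤ ‖ι h * x‖ * ‖a‖ := norm_mul_le _ _
      _ ≤ (ε / (‖a‖ + 1)) * (‖a‖ + 1) := by
          apply mul_le_mul (hx' h hh hn) (by linarith) (norm_nonneg _) (by positivity)
      _ = ε := by field_simp
  have hKclosed : IsClosed K := by
    rw [← isOpen_compl_iff]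
    rw [isOpen_iff_forall_mem_open]
    intro a ha
    simp only [Set.mem_compl_iff, hK, Set.mem_setOf_eq] at ha
    push_neg at ha
    obtain ⟨ε, hε, hcon⟩ := ha
    refine ⟨Metric.ball a (ε/2), ?_, Metric.isOpen_ball,
      Metric.mem_ball_self (by linarith)⟩
    intro b hb
    simp only [Set.mem_compl_iff, hK, Set.mem_setOf_eq]
    intro hbK
    obtain ⟨U, hU, hb'⟩ := hbK (ε/2) (by linarith)
    obtain ⟨h, hh, hn, hcon'⟩ := hcon U hU
    have hd : ‖a - b‖ < ε/2 := by
      rw [Metric.mem_ball, dist_comm, dist_eq_norm] at hb; linarith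
    have hle : ‖ι h * a‖ ≤ ε := by
      calc ‖ι h * a‖ = ‖ι h * (a - b) + ι h * b‖ := by
            have hab : a = a - b + b := by abel
            rw [← mul_add, ← hab]
        _ ≤ ‖ι h * (a - b)‖ + ‖ι h * b‖ := norm_add_le _ _
        _ ≤ ‖ι h‖ * ‖a - b‖ + ε/2 := add_le_add (norm_mul_le _ _) (hb' h hh hn)
        _ ≤ 1 * (ε/2) + ε/2 := by
            apply add_le_add_left
            apply mul_le_mul _ hd.le (norm_nonneg _) zero_le_one
            rw [hnormι]; exact hn
        _ = ε := by ring
    exact absurd hcon' (not_lt.2 hle)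
  have hgen : {a : A | ∃ f : C₀(Q, ℂ), f q = 0 ∧ a = ι f} ⊆ K := by
    rintro _ ⟨f, hfq, rfl⟩ ε hε
    refine ⟨{x | ‖f x‖ < ε}, ?_, fun h hh hn => ?_⟩
    · refine IsOpen.mem_nhds ?_ (by simp [hfq, hε])
      exact isOpen_lt (map_continuous f).norm continuous_const
    · rw [← map_mul, hnormι]
      refine c0_norm_le _ hε.le fun x => ?_
      by_cases hx : x ∈ {x | ‖f x‖ < ε}
      · simp only [Set.mem_setOf_eq] at hx
        calc ‖(h * f) x‖ = ‖h x‖ * ‖f x‖ := by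
              simp [norm_mul]
          _ ≤ 1 * ε := by
              apply mul_le_mul _ hx.le (norm_nonneg _) zero_le_one
              exact (c0_norm_apply_le h x).trans hn
          _ = ε := one_mul ε
      · have : h x = 0 := hh x hx
        simp [this, hε.le]
  have : Junif ι q ⊆ K := by
    apply cig_subset _ hKclosed hgen
    exact ⟨TwoSidedIdeal.mk' K hKzero hKadd hKneg hKmull hKmulr,
      TwoSidedIdeal.coe_mk' K hKzero hKadd hKneg hKmull hKmulr⟩
  exact this hj

end helpers

/-- For a central non-degenerate inclusion `C₀(Q) ⊆ A`, if
`Q^unif_simple` is non-empty and `⋂_{q ∈ Q^unif_simple} J^unif_q = {0}`, then the inclusion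
`C₀(Q) ⊆ A` is essential. -/
theorem stmt8 {Q : Type*} [TopologicalSpace Q] [LocallyCompactSpace Q] [T2Space Q]
    {A : Type*} [NonUnitalCStarAlgebra A]
    (ι : C₀(Q, ℂ) →⋆ₙₐ[ℂ] A) (hisom : Isometry ι)
    (hcentral : ∀ (f : C₀(Q, ℂ)) (a : A), ι f * a = a * ι f)
    (hnondeg : closure
      (Submodule.span ℂ {x : A | ∃ (f : C₀(Q, ℂ)) (a : A), x = ι f * a} : Set A) = Set.univ)
    (hne : {q : Q | QuotientSimpleBy (Junif ι q)}.Nonempty)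
    (hzero : (⋂ q ∈ {q : Q | QuotientSimpleBy (Junif ι q)}, Junif ι q) = ({0} : Set A)) :
    EssentialIncl (Set.range ι) := by
  intro L hLclosed hLne hLcap
  have hnormι : ∀ f : C₀(Q, ℂ), ‖ι f‖ = ‖f‖ := fun f =>
    hisom.norm_map_of_map_zero (map_zero ι) f
  have key : ∀ q ∈ {q : Q | QuotientSimpleBy (Junif ι q)}, (L : Set A) ⊆ Junif ι q := by
    intro q hq
    set S : Set A := {x | ∃ l ∈ (L : Set A), ∃ j ∈ Junif ι q, x = l + j} with hSdef
    -- `closure S` is a closed two-sided ideal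
    have hSzero : (0 : A) ∈ S := ⟨0, L.zero_mem, 0, cig_zero _, (add_zero 0).symm⟩
    have hTzero : (0 : A) ∈ closure S := subset_closure hSzero
    have hTadd : ∀ {x y : A}, x ∈ closure S → y ∈ closure S → x + y ∈ closure S := by
      intro x y hx hy
      refine map_mem_closure₂ continuous_add hx hy ?_
      rintro _ ⟨l₁, hl₁, j₁, hj₁, rfl⟩ _ ⟨l₂, hl₂, j₂, hj₂, rfl⟩
      exact ⟨l₁ + l₂, L.add_mem hl₁ hl₂, j₁ + j₂,
        (by
          refine Set.mem_sInter.2 fun M hM => ?_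
          have h₁ := Set.mem_sInter.1 hj₁ M hM
          have h₂ := Set.mem_sInter.1 hj₂ M hM
          obtain ⟨⟨I, rfl⟩, -, -⟩ := hM
          exact I.add_mem h₁ h₂), by abel⟩
    have hTneg : ∀ {x : A}, x ∈ closure S → -x ∈ closure S := by
      intro x hx
      refine map_mem_closure continuous_neg hx ?_
      rintro _ ⟨l, hl, j, hj, rfl⟩
      exact ⟨-l, L.neg_mem hl, -j,
        (by
          refine Set.mem_sInter.2 fun M hM => ?_
          have h₁ := Set.mem_sInter.1 hj M hM
          obtain ⟨⟨I, rfl⟩, -, -⟩ := hM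
          exact I.neg_mem h₁), by abel⟩
    have hTmull : ∀ {x y : A}, y ∈ closure S → x * y ∈ closure S := by
      intro a x hx
      refine map_mem_closure (continuous_mul_left a) hx ?_
      rintro _ ⟨l, hl, j, hj, rfl⟩
      exact ⟨a * l, L.mul_mem_left a l hl, a * j, cig_mul_left _ a hj, by rw [mul_add]⟩
    have hTmulr : ∀ {x y : A}, x ∈ closure S → x * y ∈ closure S := by
      intro x a hx
      refine map_mem_closure (f := fun y => y * a) (continuous_mul_right a) hx ?_
      rintro _ ⟨l, hl, j, hj, rfl⟩
      exact ⟨l * a, L.mul_mem_right l a hl, j * a, cig_mul_right _ a hj, by simp [add_mul]⟩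
    set T : TwoSidedIdeal A :=
      TwoSidedIdeal.mk' (closure S) hTzero hTadd hTneg hTmull hTmulr with hTdef
    have hTcoe : (T : Set A) = closure S :=
      TwoSidedIdeal.coe_mk' _ hTzero hTadd hTneg hTmull hTmulr
    have hLsubT : (L : Set A) ⊆ closure S := fun l hl =>
      subset_closure ⟨l, hl, 0, cig_zero _, (add_zero l).symm⟩
    have hJsubT : Junif ι q ⊆ (T : Set A) := by
      rw [hTcoe]
      exact fun j hj => subset_closure ⟨0, L.zero_mem, j, hj, (zero_add j).symm⟩
    have hqs : QuotientSimpleBy (Junif ι q) := hq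
    rcases hqs.2 T (hTcoe ▸ isClosed_closure) hJsubT with hT | hT
    · rw [← hT, hTcoe]
      exact hLsubT
    · -- contradiction: we show `closure S = univ` is impossible.
      exfalso
      rw [hTcoe] at hT
      -- bump `f` equal to `1` on a neighborhood `Nf` of `q`
      obtain ⟨f, Nf, hNf, hf1, -, -⟩ := exists_bump (isOpen_univ (X := Q)) (Set.mem_univ q)
      have hfS : ι f ∈ closure S := by rw [hT]; trivial
      obtain ⟨y, hyS, hy⟩ := Metric.mem_closure_iff.1 hfS (1/4) (by norm_num)
      obtain ⟨l, hl, j, hjJ, rfl⟩ := hyS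
      obtain ⟨U, hU, hUj⟩ := junif_small ι hisom hcentral q hjJ (1/4) (by norm_num)
      have hqW : q ∈ interior U ∩ interior Nf :=
        ⟨mem_interior_iff_mem_nhds.2 hU, mem_interior_iff_mem_nhds.2 hNf⟩
      obtain ⟨h, Nh, hNh, hh1, hh0, hhn⟩ :=
        exists_bump (isOpen_interior.inter isOpen_interior) hqW
      obtain ⟨g, Ng, hNg, hg1, hg0, hgn⟩ :=
        exists_bump (isOpen_interior (s := Nh)) (mem_interior_iff_mem_nhds.2 hNh)
      -- key pointwise identities
      have hhf : h * f = h := by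
        ext x
        by_cases hx : x ∈ interior U ∩ interior Nf
        · have : f x = 1 := hf1 x (interior_subset hx.2)
          simp [this]
        · have : h x = 0 := hh0 x hx
          simp [this]
      have hgh : g * h = g := by
        ext x
        by_cases hx : x ∈ Nh
        · have : h x = 1 := hh1 x hx
          simp [this, mul_comm]
        · have : g x = 0 := hg0 x fun hx' => hx (interior_subset hx')
          simp [this]
      set b := ι h with hbdef
      set c := ι g with hcdef
      have hcb : c * b = c := by rw [hbdef, hcdef, ← map_mul, hgh]
      have hbnorm : ‖b‖ ≤ 1 := by rw [hbdef, hnormι]; exact hhn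
      have hbj : ‖b * j‖ ≤ 1/4 := by
        refine hUj h (fun x hx => hh0 x fun hx' => hx (interior_subset hx'.1)) hhn
      have hbf : b * ι f = b := by rw [hbdef, ← map_mul, hhf]
      have hbl : ‖b - b * l‖ ≤ 1/2 := by
        have hdist : ‖ι f - (l + j)‖ < 1/4 := by rwa [← dist_eq_norm]
        have hre : b - b * l = b * (ι f - (l + j)) + b * j := by
          rw [mul_sub, hbf, mul_add]; abel
        rw [hre]
        calc ‖b * (ι f - (l + j)) + b * j‖
            ≤ ‖b * (ι f - (l + j))‖ + ‖b * j‖ := norm_add_le _ _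
          _ ≤ ‖b‖ * ‖ι f - (l + j)‖ + 1/4 := add_le_add (norm_mul_le _ _) hbj
          _ ≤ 1 * (1/4) + 1/4 :=
              add_le_add_left (mul_le_mul hbnorm hdist.le (norm_nonneg _) zero_le_one) _
          _ = 1/2 := by norm_num
      -- iterated squaring
      set seq : ℕ → A × A := fun n =>
        Nat.rec (b, b * l)
          (fun _ p => (p.1 * p.1, p.2 * p.1 + p.1 * p.2 - p.2 * p.2)) n with hseqdef
      have hseq : ∀ n : ℕ, (seq n).2 ∈ L ∧
          ‖(seq n).1 - (seq n).2‖ ≤ (1/2 : ℝ)^(n+1) ∧ c * (seq n).1 = c := by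
        intro n
        induction n with
        | zero =>
          refine ⟨L.mul_mem_left b l hl, ?_, hcb⟩
          simpa [hseqdef] using hbl
        | succ n ih =>
          obtain ⟨ih1, ih2, ih3⟩ := ih
          have hstep1 : (seq (n+1)).1 = (seq n).1 * (seq n).1 := rfl
          have hstep2 : (seq (n+1)).2 =
            (seq n).2 * (seq n).1 + (seq n).1 * (seq n).2 - (seq n).2 * (seq n).2 := rfl
          refine ⟨?_, ?_, ?_⟩
          · rw [hstep2]
            exact L.sub_mem (L.add_mem (L.mul_mem_right _ _ ih1) (L.mul_mem_left _ _ ih1))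
              (L.mul_mem_right _ _ ih1)
          · have hfac : (seq (n+1)).1 - (seq (n+1)).2
                = ((seq n).1 - (seq n).2) * ((seq n).1 - (seq n).2) := by
              rw [hstep1, hstep2]
              noncomm_ring
            rw [hfac]
            calc ‖((seq n).1 - (seq n).2) * ((seq n).1 - (seq n).2)‖
                ≤ ‖(seq n).1 - (seq n).2‖ * ‖(seq n).1 - (seq n).2‖ := norm_mul_le _ _
              _ ≤ (1/2 : ℝ)^(n+1) * (1/2 : ℝ)^(n+1) :=
                  mul_le_mul ih2 ih2 (norm_nonneg _) (by positivity)
              _ = (1/2 : ℝ)^(2*(n+1)) := by rw [← pow_add]; ring_nf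
              _ ≤ (1/2 : ℝ)^(n+1+1) := by
                  apply pow_le_pow_of_le_one (by norm_num) (by norm_num)
                  omega
          · rw [hstep1, ← mul_assoc, ih3, ih3]
      have hcL : c ∈ (L : Set A) := by
        rw [← hLclosed.closure_eq]
        rw [Metric.mem_closure_iff]
        intro ε hε
        have hc1 : (0:ℝ) < ‖c‖ + 1 := by positivity
        obtain ⟨n, hn⟩ := exists_pow_lt_of_lt_one (div_pos hε hc1) (by norm_num : (1/2:ℝ) < 1)
        refine ⟨c * (seq n).2, ?_, ?_⟩
        · exact L.mul_mem_left _ _ (hseq n).1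
        · rw [dist_eq_norm]
          have hre : c - c * (seq n).2 = c * ((seq n).1 - (seq n).2) := by
            rw [mul_sub, (hseq n).2.2]
          rw [hre]
          calc ‖c * ((seq n).1 - (seq n).2)‖
              ≤ ‖c‖ * ‖(seq n).1 - (seq n).2‖ := norm_mul_le _ _
            _ ≤ (‖c‖ + 1) * (1/2:ℝ)^(n+1) := by
                apply mul_le_mul (by linarith) (hseq n).2.1 (norm_nonneg _) (by positivity)
            _ ≤ (‖c‖ + 1) * (1/2:ℝ)^n := by
                apply mul_le_mul_of_nonneg_left _ hc1.le
                apply pow_le_pow_of_le_one (by norm_num) (by norm_num)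
                omega
            _ < (‖c‖ + 1) * (ε / (‖c‖ + 1)) := by
                exact mul_lt_mul_of_pos_left hn hc1
            _ = ε := by field_simp
      have hc0 : c = 0 := by
        have : c ∈ Set.range ι ∩ (L : Set A) := ⟨⟨g, rfl⟩, hcL⟩
        rw [hLcap] at this
        simpa using this
      have hgz : g = 0 := by
        apply hisom.injective
        rw [map_zero, ← hcdef]
        exact hc0
      have hgq : g q = 1 := hg1 q (mem_of_mem_nhds hNg)
      rw [hgz] at hgq
      simp at hgq
  refine Set.eq_of_subset_of_subset ?_ ?_
  · intro x hx
    have hmem : x ∈ ⋂ q ∈ {q : Q | QuotientSimpleBy (Junif ι q)}, Junif ι q :=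
      Set.mem_iInter₂.2 fun q hq => key q hq hx
    rwa [hzero] at hmem
  · intro x hx
    rw [Set.mem_singleton_iff] at hx
    subst hx
    exact L.zero_mem
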